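/- (Generalization bound with joint distributions, Theorem A.2.) Let X be a measurable space and Y = {−1, 1}. Let M be a countable set of measurable functions from X × Y to {−1, 1}. Let P_S and P_T be probability measures on X and let κ_S and κ_T be Markov kernels from X to Y, with source joint distribution P_S ⊗ κ_S and target joint distribution P_T ⊗ κ_T. Let H be a nonempty set of measurable hypotheses and set λ_H := inf_{h' ∈ H} ( ε_{P_S ⊗ κ_S}(h') + ε_{P_T ⊗ κ_T}(h') ). Then for every measurable hypothesis h with m_h ∈ M and the constant function 1 ∈ M, ε_{P_T ⊗ κ_T}(h) ≤ ε_{P_S ⊗ κ_S}(h) + d^{κ_S}_{M△M}(P_S, P_T) + ∫_X D_M(κ_S, κ_T)(x) dP_T(x) + λ_H. -/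

import Mathlib

open MeasureTheory ProbabilityTheory
open scoped ENNReal NNReal

noncomputable section

namespace IDG

variable {X : Type*} [MeasurableSpace X]

/-- The risk of a hypothesis `h : X → ℤˣ` (values in `{-1, 1}`) with respect to a joint
distribution `μ` on `X × ℤˣ`: the measure of the error set `{(x, y) | h x ≠ y}`. -/
def risk (μ : Measure (X × ℤˣ)) (h : X → ℤˣ) : ℝ :=
  (μ {z : X × ℤˣ | h z.1 ≠ z.2}).toReal

/-- The symmetric-difference set `A(m, m') = {z | m z ≠ m' z}`. -/
def errSet (m m' : X × ℤˣ → ℤˣ) : Set (X × ℤˣ) := {z | m z ≠ m' z}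

/-- The `x`-section of `A(m, m')`. -/
def xsec (m m' : X × ℤˣ → ℤˣ) (x : X) : Set ℤˣ := {y | m (x, y) ≠ m' (x, y)}

/-- The `M△M`-divergence between two measures on `X × ℤˣ`. -/
def dMM (M : Set (X × ℤˣ → ℤˣ)) (μ ν : Measure (X × ℤˣ)) : ℝ :=
  ⨆ m : M, ⨆ m' : M, |(μ (errSet m.1 m'.1)).toReal - (ν (errSet m.1 m'.1)).toReal|

/-- The `κ`-weighted `M△M`-divergence between two measures on `X`. -/
def dMMker (M : Set (X × ℤˣ → ℤˣ)) (κ : Kernel X ℤˣ) (P Q : Measure X) : ℝ :=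
  ⨆ m : M, ⨆ m' : M,
    |(∫ x, (κ x (xsec m.1 m'.1 x)).toReal ∂P) - (∫ x, (κ x (xsec m.1 m'.1 x)).toReal ∂Q)|

/-- Pointwise posterior discrepancy between two kernels. -/
def DM (M : Set (X × ℤˣ → ℤˣ)) (κ κ' : Kernel X ℤˣ) (x : X) : ℝ :=
  ⨆ m : M, ⨆ m' : M, |(κ x (xsec m.1 m'.1 x)).toReal - (κ' x (xsec m.1 m'.1 x)).toReal|

instance : MeasurableSingletonClass ℤˣ :=
  ⟨fun u => MeasurableSpace.measurableSet_comap.mpr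
    ⟨{(u : ℤ)}, MeasurableSet.singleton _, by ext v; simp [Units.ext_iff]⟩⟩

lemma measurableSet_errSet {m m' : X × ℤˣ → ℤˣ} (hm : Measurable m) (hm' : Measurable m') :
    MeasurableSet (errSet m m') :=
  (measurableSet_eq_fun hm hm').compl

lemma xsec_eq_preimage (m m' : X × ℤˣ → ℤˣ) (x : X) :
    xsec m m' x = Prod.mk x ⁻¹' errSet m m' := rfl

/-- a double `ciSup` bound from below. -/
lemma le_double_ciSup {ι κ : Type*} (f : ι → κ → ℝ) (c : ℝ) (hc : 0 ≤ c)
    (hb : ∀ i j, f i j ≤ c) (i : ι) (j : κ) : f i j ≤ ⨆ i, ⨆ j, f i j := by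
  have h1 : ∀ i, BddAbove (Set.range (f i)) := fun i =>
    ⟨c, by rintro _ ⟨j, rfl⟩; exact hb i j⟩
  have h2 : BddAbove (Set.range fun i => ⨆ j, f i j) :=
    ⟨c, by rintro _ ⟨i, rfl⟩; exact Real.iSup_le (fun j => hb i j) hc⟩
  exact le_trans (le_ciSup (h1 i) j) (le_ciSup h2 i)

lemma compProd_errSet_toReal (P : Measure X) [IsProbabilityMeasure P]
    (κ : Kernel X ℤˣ) [IsMarkovKernel κ] {m m' : X × ℤˣ → ℤˣ}
    (hm : Measurable m) (hm' : Measurable m') :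
    ((P ⊗ₘ κ) (errSet m m')).toReal = ∫ x, (κ x (xsec m m' x)).toReal ∂P := by
  rw [Measure.compProd_apply (measurableSet_errSet hm hm')]
  exact (integral_toReal
    (Kernel.measurable_kernel_prodMk_left (measurableSet_errSet hm hm')).aemeasurable
    (Filter.Eventually.of_forall fun x => measure_lt_top _ _)).symm

lemma risk_eq (P : Measure X) (κ : Kernel X ℤˣ) (h : X → ℤˣ) :
    risk (P ⊗ₘ κ) h
      = ((P ⊗ₘ κ) (errSet (fun z : X × ℤˣ => z.2 * h z.1) (fun _ => 1))).toReal := by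
  have : {z : X × ℤˣ | h z.1 ≠ z.2} = errSet (fun z : X × ℤˣ => z.2 * h z.1) (fun _ => 1) := by
    ext z
    simp only [errSet, Set.mem_setOf_eq, ne_eq]
    constructor
    · intro hne he
      exact hne (by rcases Int.units_eq_one_or z.2 with h2 | h2 <;>
        rcases Int.units_eq_one_or (h z.1) with h1 | h1 <;> simp_all)
    · intro hne he
      exact hne (by rw [he, Int.units_mul_self])
  rw [risk, this]

/-- **Generalization bound with joint distributions (Theorem A.2).** -/
theorem joint_generalization_bound
    (M : Set (X × ℤˣ → ℤˣ)) (hMcount : M.Countable) (hMmeas : ∀ m ∈ M, Measurable m)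
    (PS PT : Measure X) (hPS : IsProbabilityMeasure PS) (hPT : IsProbabilityMeasure PT)
    (κS κT : Kernel X ℤˣ) (hκS : IsMarkovKernel κS) (hκT : IsMarkovKernel κT)
    (H : Set (X → ℤˣ)) (hH : H.Nonempty) (hHmeas : ∀ h' ∈ H, Measurable h')
    (h : X → ℤˣ) (hmeas : Measurable h)
    (hmh : (fun z : X × ℤˣ => z.2 * h z.1) ∈ M)
    (hone : (fun _ : X × ℤˣ => (1 : ℤˣ)) ∈ M) :
    risk (PT ⊗ₘ κT) h ≤
      risk (PS ⊗ₘ κS) h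
      + dMMker M κS PS PT
      + (∫ x, DM M κS κT x ∂PT)
      + (⨅ h' : H, (risk (PS ⊗ₘ κS) h'.1 + risk (PT ⊗ₘ κT) h'.1)) := by
  have hMc : Countable M := hMcount.to_subtype
  set mh : X × ℤˣ → ℤˣ := fun z => z.2 * h z.1 with hmhdef
  set one : X × ℤˣ → ℤˣ := fun _ => 1 with honedef
  have hmhm : Measurable mh := measurable_snd.mul (hmeas.comp measurable_fst)
  have honem : Measurable one := measurable_const
  -- measurability/bounds for the basic maps
  have secmeas : ∀ (m m' : X × ℤˣ → ℤˣ), Measurable m → Measurable m' →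
      ∀ (κ : Kernel X ℤˣ) (_ : IsMarkovKernel κ),
      Measurable (fun x => (κ x (xsec m m' x)).toReal) := by
    intro m m' hm hm' κ hκ
    simp_rw [xsec_eq_preimage]
    exact (Kernel.measurable_kernel_prodMk_left (measurableSet_errSet hm hm')).ennreal_toReal
  have secbound : ∀ (m m' : X × ℤˣ → ℤˣ) (κ : Kernel X ℤˣ) (_ : IsMarkovKernel κ) (x : X),
      (κ x (xsec m m' x)).toReal ≤ 1 := by
    intro m m' κ hκ x
    rw [show (1 : ℝ) = (1 : ℝ≥0∞).toReal by simp]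
    exact ENNReal.toReal_mono ENNReal.one_ne_top prob_le_one
  -- DM bounds and measurability
  have DMbound : ∀ x, DM M κS κT x ≤ 2 := by
    intro x
    refine Real.iSup_le (fun m => Real.iSup_le (fun m' => ?_) (by norm_num)) (by norm_num)
    have h1 := secbound m.1 m'.1 κS hκS x
    have h2 := secbound m.1 m'.1 κT hκT x
    have h3 : (0:ℝ) ≤ (κS x (xsec m.1 m'.1 x)).toReal := ENNReal.toReal_nonneg
    have h4 : (0:ℝ) ≤ (κT x (xsec m.1 m'.1 x)).toReal := ENNReal.toReal_nonneg
    rw [abs_le]; constructor <;> linarith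
  have DMnonneg : ∀ x, 0 ≤ DM M κS κT x := by
    intro x
    have := le_double_ciSup
      (f := fun m m' : M => |(κS x (xsec m.1 m'.1 x)).toReal - (κT x (xsec m.1 m'.1 x)).toReal|)
      2 (by norm_num)
      (fun m m' => by
        have h1 := secbound m.1 m'.1 κS hκS x
        have h2 := secbound m.1 m'.1 κT hκT x
        have h3 : (0:ℝ) ≤ (κS x (xsec m.1 m'.1 x)).toReal := ENNReal.toReal_nonneg
        have h4 : (0:ℝ) ≤ (κT x (xsec m.1 m'.1 x)).toReal := ENNReal.toReal_nonneg
        rw [abs_le]; constructor <;> linarith)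
      ⟨mh, hmh⟩ ⟨mh, hmh⟩
    exact le_trans (abs_nonneg _) this
  have DMmeas : Measurable (DM M κS κT) := by
    refine Measurable.iSup (fun m => Measurable.iSup (fun m' => ?_))
    exact ((secmeas m.1 m'.1 (hMmeas m.1 m.2) (hMmeas m'.1 m'.2) κS hκS).sub
      (secmeas m.1 m'.1 (hMmeas m.1 m.2) (hMmeas m'.1 m'.2) κT hκT)).abs
  have DMint : Integrable (DM M κS κT) PT := by
    refine (integrable_const (2:ℝ)).mono' DMmeas.aestronglyMeasurable ?_
    exact Filter.Eventually.of_forall fun x => by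
      rw [Real.norm_eq_abs, abs_of_nonneg (DMnonneg x)]; exact DMbound x
  -- the error-set section functions
  set fS : X → ℝ := fun x => (κS x (xsec mh one x)).toReal with hfS
  set fT : X → ℝ := fun x => (κT x (xsec mh one x)).toReal with hfT
  have fSmeas : Measurable fS := secmeas mh one hmhm honem κS hκS
  have fTmeas : Measurable fT := secmeas mh one hmhm honem κT hκT
  have fSint : ∀ (P : Measure X), IsProbabilityMeasure P → Integrable fS P := by
    intro P hP
    refine (integrable_const (1:ℝ)).mono' fSmeas.aestronglyMeasurable ?_
    exact Filter.Eventually.of_forall fun x => by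
      rw [Real.norm_eq_abs, abs_of_nonneg ENNReal.toReal_nonneg]
      exact secbound mh one κS hκS x
  have fTint : Integrable fT PT := by
    refine (integrable_const (1:ℝ)).mono' fTmeas.aestronglyMeasurable ?_
    exact Filter.Eventually.of_forall fun x => by
      rw [Real.norm_eq_abs, abs_of_nonneg ENNReal.toReal_nonneg]
      exact secbound mh one κT hκT x
  -- Step 1: risks as integrals
  have hriskT : risk (PT ⊗ₘ κT) h = ∫ x, fT x ∂PT := by
    rw [risk_eq PT κT h, compProd_errSet_toReal PT κT hmhm honem]
  have hriskS : risk (PS ⊗ₘ κS) h = ∫ x, fS x ∂PS := by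
    rw [risk_eq PS κS h, compProd_errSet_toReal PS κS hmhm honem]
  -- Step 2: pointwise bound fT ≤ fS + DM
  have hpt : ∀ x, fT x ≤ fS x + DM M κS κT x := by
    intro x
    have hle : |(κS x (xsec mh one x)).toReal - (κT x (xsec mh one x)).toReal|
        ≤ DM M κS κT x :=
      le_double_ciSup
        (f := fun m m' : M => |(κS x (xsec m.1 m'.1 x)).toReal - (κT x (xsec m.1 m'.1 x)).toReal|)
        2 (by norm_num)
        (fun m m' => by
          have h1 := secbound m.1 m'.1 κS hκS x
          have h2 := secbound m.1 m'.1 κT hκT x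
          have h3 : (0:ℝ) ≤ (κS x (xsec m.1 m'.1 x)).toReal := ENNReal.toReal_nonneg
          have h4 : (0:ℝ) ≤ (κT x (xsec m.1 m'.1 x)).toReal := ENNReal.toReal_nonneg
          rw [abs_le]; constructor <;> linarith)
        ⟨mh, hmh⟩ ⟨one, hone⟩
    have := abs_le.1 hle
    simp only [hfS, hfT] at *
    linarith [this.1]
  -- Step 3: integrate
  have hint1 : ∫ x, fT x ∂PT ≤ ∫ x, fS x ∂PT + ∫ x, DM M κS κT x ∂PT := by
    rw [← integral_add (fSint PT hPT) DMint]
    exact integral_mono fTint ((fSint PT hPT).add DMint) hpt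
  -- Step 4: transfer PT to PS using dMMker
  have hint2 : ∫ x, fS x ∂PT ≤ ∫ x, fS x ∂PS + dMMker M κS PS PT := by
    have hle : |(∫ x, (κS x (xsec mh one x)).toReal ∂PS)
        - (∫ x, (κS x (xsec mh one x)).toReal ∂PT)| ≤ dMMker M κS PS PT :=
      le_double_ciSup
        (f := fun m m' : M => |(∫ x, (κS x (xsec m.1 m'.1 x)).toReal ∂PS)
          - (∫ x, (κS x (xsec m.1 m'.1 x)).toReal ∂PT)|)
        2 (by norm_num)
        (fun m m' => by
          have hig : ∀ (P : Measure X), IsProbabilityMeasure P →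
              ∫ x, (κS x (xsec m.1 m'.1 x)).toReal ∂P ∈ Set.Icc (0:ℝ) 1 := by
            intro P hP
            constructor
            · exact integral_nonneg fun x => ENNReal.toReal_nonneg
            · calc ∫ x, (κS x (xsec m.1 m'.1 x)).toReal ∂P
                  ≤ ∫ _x, (1:ℝ) ∂P := by
                    refine integral_mono ?_ (integrable_const 1)
                      (fun x => secbound m.1 m'.1 κS hκS x)
                    refine (integrable_const (1:ℝ)).mono'
                      (secmeas m.1 m'.1 (hMmeas m.1 m.2) (hMmeas m'.1 m'.2) κS
                        hκS).aestronglyMeasurable ?_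
                    exact Filter.Eventually.of_forall fun x => by
                      rw [Real.norm_eq_abs, abs_of_nonneg ENNReal.toReal_nonneg]
                      exact secbound m.1 m'.1 κS hκS x
                _ = 1 := by simp
          have h1 := hig PS hPS
          have h2 := hig PT hPT
          rw [abs_le]
          constructor <;> [linarith [h1.1, h2.2]; linarith [h1.2, h2.1]])
        ⟨mh, hmh⟩ ⟨one, hone⟩
    have := abs_le.1 hle
    simp only [hfS] at *
    linarith [this.1]
  -- Step 5: the infimum is nonnegative
  have hinf : 0 ≤ ⨅ h' : H, (risk (PS ⊗ₘ κS) h'.1 + risk (PT ⊗ₘ κT) h'.1) :=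
    Real.iInf_nonneg fun h' => add_nonneg ENNReal.toReal_nonneg ENNReal.toReal_nonneg
  rw [hriskT, hriskS]
  linarith
end IDG
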